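/- Let (U_k)_{k≥0} be a sequence of nonnegative real numbers such that U_0 ≤ C for some constant C > 0, and such that there exist constants A ≥ 1, 1 < β₁ < β₂, C' > 0 and K > 0 with U_k ≤ C' (A^k / K)(U_{k-1}^{β₁} + U_{k-1}^{β₂}) for all k ≥ 1. Then there exists K₀ > 0 (depending on C, C', A, β₁, β₂) such that for every K > K₀ the sequence U_k converges to 0 as k → ∞. -/

import Mathlib

open Filter

/-- De Giorgi iteration lemma: if `U 0 ≤ C` and
`U k ≤ C' * (A^k / K) * (U (k-1) ^ β₁ + U (k-1) ^ β₂)` for all `k ≥ 1`,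
then for `K` large enough `U k → 0`. -/
theorem deGiorgi_iteration
    (C C' A β₁ β₂ : ℝ) (hC : 0 < C) (hC' : 0 < C') (hA : 1 ≤ A)
    (hβ₁ : 1 < β₁) (hβ : β₁ < β₂) :
    ∃ K₀ > 0, ∀ K > K₀, ∀ U : ℕ → ℝ,
      (∀ k, 0 ≤ U k) → U 0 ≤ C →
      (∀ k : ℕ, 1 ≤ k → U k ≤ C' * (A ^ k / K) * (U (k - 1) ^ β₁ + U (k - 1) ^ β₂)) →
      Tendsto U atTop (nhds 0) := by
  have hApos : (0:ℝ) < A := lt_of_lt_of_le one_pos hA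
  have hβ₁0 : (0:ℝ) < β₁ - 1 := by linarith
  set δ : ℝ := ((2*A)⁻¹) ^ ((β₁-1)⁻¹) with hδdef
  have h2A : (1:ℝ) < 2*A := by linarith
  have h2Apos : (0:ℝ) < (2*A)⁻¹ := by positivity
  have hδpos : 0 < δ := Real.rpow_pos_of_pos h2Apos _
  have hδlt1 : δ < 1 := Real.rpow_lt_one h2Apos.le (by
      rw [inv_lt_one_iff₀]; right; exact h2A) (by positivity)
  have hδpow : δ ^ (β₁ - 1) = (2*A)⁻¹ := by
    rw [hδdef, ← Real.rpow_mul h2Apos.le, inv_mul_cancel₀ hβ₁0.ne', Real.rpow_one]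
  set E : ℝ := (max 1 C) ^ (β₂ - β₁) with hEdef
  have hEpos : 0 < E := Real.rpow_pos_of_pos (lt_of_lt_of_le one_pos (le_max_left _ _)) _
  set D : ℝ := C' * (1 + E) with hDdef
  have hDpos : 0 < D := by positivity
  set K₀ : ℝ := D * A * C ^ β₁ / (C * δ) with hK₀def
  have hK₀pos : 0 < K₀ := by
    have : (0:ℝ) < C ^ β₁ := Real.rpow_pos_of_pos hC _
    positivity
  refine ⟨K₀, hK₀pos, ?_⟩
  intro K hK U hU hU0 hrec
  have hKpos : 0 < K := lt_trans hK₀pos hK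
  have key : ∀ k, U k ≤ C * δ ^ k := by
    intro k
    induction k with
    | zero => simpa using hU0
    | succ j ih =>
      have hM0 : 0 < C * δ ^ j := by positivity
      have h1 : U j ^ β₁ ≤ (C * δ ^ j) ^ β₁ :=
        Real.rpow_le_rpow (hU j) ih (by linarith)
      have hMleC : C * δ ^ j ≤ max 1 C :=
        le_trans (mul_le_of_le_one_right hC.le (pow_le_one₀ hδpos.le hδlt1.le))
          (le_max_right _ _)
      have h2 : U j ^ β₂ ≤ (C * δ ^ j) ^ β₁ * E := by
        calc U j ^ β₂ ≤ (C * δ ^ j) ^ β₂ :=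
              Real.rpow_le_rpow (hU j) ih (by linarith)
          _ = (C * δ ^ j) ^ β₁ * (C * δ ^ j) ^ (β₂ - β₁) := by
              rw [← Real.rpow_add hM0]; ring_nf
          _ ≤ (C * δ ^ j) ^ β₁ * E := by
              have h' : (C * δ ^ j) ^ (β₂ - β₁) ≤ E :=
                Real.rpow_le_rpow hM0.le hMleC (by linarith)
              have hb : (0:ℝ) ≤ (C * δ ^ j) ^ β₁ := (Real.rpow_pos_of_pos hM0 _).le
              exact mul_le_mul_of_nonneg_left h' hb
      have h3 : U (j+1) ≤ C' * (A ^ (j+1) / K) * ((C * δ ^ j) ^ β₁ * (1 + E)) := by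
        have hr := hrec (j+1) (by omega)
        simp only [Nat.add_sub_cancel] at hr
        calc U (j+1) ≤ C' * (A ^ (j+1) / K) * (U j ^ β₁ + U j ^ β₂) := hr
          _ ≤ C' * (A ^ (j+1) / K) * ((C * δ ^ j) ^ β₁ + (C * δ ^ j) ^ β₁ * E) := by
              have hc : (0:ℝ) ≤ C' * (A ^ (j+1) / K) := by positivity
              exact mul_le_mul_of_nonneg_left (add_le_add h1 h2) hc
          _ = C' * (A ^ (j+1) / K) * ((C * δ ^ j) ^ β₁ * (1 + E)) := by ring
      have hδj : ((δ ^ j : ℝ)) ^ β₁ = δ ^ j * ((2*A)⁻¹) ^ j := by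
        rw [← Real.rpow_natCast δ j, ← Real.rpow_mul hδpos.le]
        have hexp : (j:ℝ) * β₁ = (j:ℝ) + (β₁ - 1) * (j:ℝ) := by ring
        rw [hexp, Real.rpow_add hδpos, Real.rpow_natCast, Real.rpow_mul hδpos.le,
          hδpow, Real.rpow_natCast]
      have hfinal : C' * (A ^ (j+1) / K) * ((C * δ ^ j) ^ β₁ * (1 + E)) ≤ C * δ ^ (j+1) := by
        have hCδ : (C * δ ^ j) ^ β₁ = C ^ β₁ * (δ ^ j * ((2*A)⁻¹) ^ j) := by
          rw [Real.mul_rpow hC.le (by positivity), hδj]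
        rw [hCδ]
        have hAj : A ^ (j+1) * ((2*A)⁻¹) ^ j = A * ((2:ℝ)⁻¹) ^ j := by
          rw [mul_inv, mul_pow, pow_succ]
          field_simp
          ring_nf
          rw [← mul_pow, mul_inv_cancel₀ hApos.ne', one_pow]
        have hK' : D * A * C ^ β₁ / K ≤ C * δ := by
          rw [div_le_iff₀ hKpos]
          have hle : K₀ * (C * δ) ≤ K * (C * δ) := by
            apply mul_le_mul_of_nonneg_right hK.le (by positivity)
          have heq : K₀ * (C * δ) = D * A * C ^ β₁ := by
            rw [hK₀def]; field_simp
          calc D * A * C ^ β₁ = K₀ * (C * δ) := heq.symm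
            _ ≤ K * (C * δ) := hle
            _ = C * δ * K := by ring
        calc C' * (A ^ (j+1) / K) * (C ^ β₁ * (δ ^ j * ((2*A)⁻¹) ^ j) * (1 + E))
            = (D * A * C ^ β₁ / K) * δ ^ j * ((2:ℝ)⁻¹) ^ j := by
              rw [hDdef]
              field_simp
              rw [one_div, one_div]
              exact hAj
          _ ≤ (C * δ) * δ ^ j * 1 := by
              apply mul_le_mul
              · apply mul_le_mul_of_nonneg_right hK' (by positivity)
              · exact pow_le_one₀ (by norm_num) (by norm_num)
              · positivity
              · positivity
          _ = C * δ ^ (j+1) := by ring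
      exact le_trans h3 hfinal
  have hten : Tendsto (fun k : ℕ => C * δ ^ k) atTop (nhds 0) := by
    have := (tendsto_pow_atTop_nhds_zero_of_lt_one hδpos.le hδlt1).const_mul C
    simpa using this
  exact squeeze_zero hU key hten
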